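/- arXiv:chao-dyn/9506014 — 2 statements merged into one kernel-verified Lean document; each statement's English description precedes it below -/
import Mathlib

section
/- Let (ζ_n)_{n≥0} be a sequence of complex numbers with |ζ_n| < exp(a + bn) for some a ∈ ℝ, b > 0. Then the set of entire functions s with s(n) = ζ_n for all integers n ≥ 0 is infinite; indeed, it is a coset s₀ + S₀ where S₀ is the set of entire functions vanishing at all non-negative integers, and S₀ is infinite. -/
open Complex Set

noncomputable def sincTerm (k : ℕ) (w : ℂ) : ℂ :=
  (-1) ^ k * (Real.pi : ℂ) ^ (2 * k) * w ^ (2 * k) / ((2 * k + 1).factorial : ℂ)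

noncomputable def csinc (w : ℂ) : ℂ := ∑' k, sincTerm k w

lemma hasSum_sincTerm {w : ℂ} (hw : w ≠ 0) :
    HasSum (fun k => sincTerm k w) (Complex.sin ((Real.pi : ℂ) * w) / ((Real.pi : ℂ) * w)) := by
  have hpw : (Real.pi : ℂ) * w ≠ 0 :=
    mul_ne_zero (Complex.ofReal_ne_zero.2 Real.pi_ne_zero) hw
  have h := (Complex.hasSum_sin ((Real.pi : ℂ) * w)).mul_left (((Real.pi : ℂ) * w)⁻¹)
  rw [inv_mul_eq_div] at h
  convert h using 2 with k
  · rfl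
  have hf : (((2 * k + 1).factorial : ℕ) : ℂ) ≠ 0 := by exact_mod_cast (Nat.factorial_pos _).ne'
  simp only [sincTerm]
  field_simp
  ring

lemma csinc_eq {w : ℂ} (hw : w ≠ 0) :
    csinc w = Complex.sin ((Real.pi : ℂ) * w) / ((Real.pi : ℂ) * w) :=
  (hasSum_sincTerm hw).tsum_eq

lemma csinc_zero : csinc 0 = 1 := by
  rw [csinc, tsum_eq_single 0]
  · simp [sincTerm]
  · intro k hk
    have h2 : 2 * k ≠ 0 := by omega
    simp [sincTerm, zero_pow h2]

lemma csinc_int {k : ℤ} (hk : k ≠ 0) : csinc (k : ℂ) = 0 := by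
  have hk' : (k : ℂ) ≠ 0 := Int.cast_ne_zero.2 hk
  rw [csinc_eq hk', Complex.sin_eq_zero_iff.2 ⟨k, by ring⟩, zero_div]

lemma norm_sin_le (z : ℂ) : ‖Complex.sin z‖ ≤ Real.exp |z.im| := by
  rw [Complex.sin]
  have h1 : ‖Complex.exp (-z * Complex.I)‖ ≤ Real.exp |z.im| := by
    rw [Complex.norm_exp]
    apply Real.exp_le_exp.2
    simp [neg_mul, Complex.mul_I_re]
    exact le_abs_self _
  have h2 : ‖Complex.exp (z * Complex.I)‖ ≤ Real.exp |z.im| := by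
    rw [Complex.norm_exp]
    apply Real.exp_le_exp.2
    simp [Complex.mul_I_re]
    exact neg_le_abs _
  calc ‖(Complex.exp (-z * Complex.I) - Complex.exp (z * Complex.I)) * Complex.I / 2‖
      = ‖Complex.exp (-z * Complex.I) - Complex.exp (z * Complex.I)‖ / 2 := by
        simp [norm_div, norm_mul]
    _ ≤ (‖Complex.exp (-z * Complex.I)‖ + ‖Complex.exp (z * Complex.I)‖) / 2 := by
        gcongr; exact norm_sub_le _ _
    _ ≤ (Real.exp |z.im| + Real.exp |z.im|) / 2 := by gcongr
    _ = Real.exp |z.im| := by ring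

lemma summable_v (x : ℝ) : Summable (fun k : ℕ => x ^ (2 * k) / ((2 * k).factorial : ℝ)) := by
  have := (Real.summable_pow_div_factorial x).comp_injective
    (fun m n h => by simpa using h : Function.Injective (fun k : ℕ => 2 * k))
  exact this

lemma norm_sincTerm_le (k : ℕ) (w : ℂ) :
    ‖sincTerm k w‖ ≤ (Real.pi * ‖w‖) ^ (2 * k) / ((2 * k).factorial : ℝ) := by
  have heq : ‖sincTerm k w‖ = (Real.pi * ‖w‖) ^ (2 * k) / (((2 * k + 1).factorial : ℕ) : ℝ) := by
    rw [sincTerm, norm_div, norm_mul, norm_mul, norm_pow, norm_pow, mul_pow]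
    simp [Complex.norm_real, Real.norm_eq_abs, _root_.abs_of_nonneg Real.pi_pos.le]
  rw [heq]
  gcongr
  omega

noncomputable def Tc : ℝ := ∑' k : ℕ, Real.pi ^ (2 * k) / ((2 * k).factorial : ℝ)

lemma Tc_nonneg : 0 ≤ Tc := tsum_nonneg (fun k => by positivity)

lemma norm_csinc_le {w : ℂ} {R : ℝ} (hR : 0 ≤ R) (him : |w.im| ≤ R) :
    ‖csinc w‖ ≤ Tc + Real.exp (Real.pi * R) := by
  rcases le_or_gt ‖w‖ 1 with h1 | h1
  · have hb : ‖csinc w‖ ≤ Tc := by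
      refine tsum_of_norm_bounded ((summable_v Real.pi).hasSum) (fun k => ?_)
      refine (norm_sincTerm_le k w).trans ?_
      gcongr
      calc Real.pi * ‖w‖ ≤ Real.pi * 1 := by
            exact mul_le_mul_of_nonneg_left h1 Real.pi_pos.le
        _ = Real.pi := mul_one _
    exact hb.trans (le_add_of_nonneg_right (Real.exp_pos _).le)
  · have hw : w ≠ 0 := by intro h; rw [h, norm_zero] at h1; linarith
    have hpw : (Real.pi : ℂ) * w ≠ 0 :=
      mul_ne_zero (Complex.ofReal_ne_zero.2 Real.pi_ne_zero) hw
    rw [csinc_eq hw, norm_div]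
    have him' : |((Real.pi : ℂ) * w).im| ≤ Real.pi * R := by
      rw [show ((Real.pi : ℂ) * w).im = Real.pi * w.im by simp [Complex.re_ofReal_mul]]
      rw [abs_mul, _root_.abs_of_nonneg Real.pi_pos.le]
      exact mul_le_mul_of_nonneg_left him Real.pi_pos.le
    have hnum : ‖Complex.sin ((Real.pi : ℂ) * w)‖ ≤ Real.exp (Real.pi * R) :=
      (norm_sin_le _).trans (Real.exp_le_exp.2 him')
    have hden : (1:ℝ) ≤ ‖(Real.pi : ℂ) * w‖ := by
      rw [norm_mul, Complex.norm_real, Real.norm_eq_abs, _root_.abs_of_nonneg Real.pi_pos.le]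
      nlinarith [Real.pi_gt_three]
    calc ‖Complex.sin ((Real.pi : ℂ) * w)‖ / ‖(Real.pi : ℂ) * w‖
        ≤ ‖Complex.sin ((Real.pi : ℂ) * w)‖ / 1 := by
          gcongr
      _ ≤ Real.exp (Real.pi * R) := by rw [div_one]; exact hnum
      _ ≤ Tc + Real.exp (Real.pi * R) := le_add_of_nonneg_left Tc_nonneg


lemma differentiable_sincTerm (k : ℕ) : Differentiable ℂ (fun w : ℂ => sincTerm k w) := by
  unfold sincTerm
  exact ((differentiable_const _).mul (differentiable_pow _)).div_const _

lemma differentiable_csinc : Differentiable ℂ csinc := by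
  intro z
  have hR : (0:ℝ) < ‖z‖ + 1 := by positivity
  have hd : DifferentiableOn ℂ (fun w : ℂ => ∑' k, sincTerm k w) (Metric.ball 0 (‖z‖ + 1)) := by
    refine Complex.differentiableOn_tsum_of_summable_norm (summable_v (Real.pi * (‖z‖ + 1)))
      (fun k => (differentiable_sincTerm k).differentiableOn) Metric.isOpen_ball ?_
    intro k w hw
    rw [Metric.mem_ball, dist_zero_right] at hw
    refine (norm_sincTerm_le k w).trans ?_
    gcongr
  have : DifferentiableAt ℂ (fun w : ℂ => ∑' k, sincTerm k w) z :=
    hd.differentiableAt (Metric.isOpen_ball.mem_nhds (by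
      rw [Metric.mem_ball, dist_zero_right]; linarith))
  exact this.congr_of_eventuallyEq (Filter.Eventually.of_forall (fun w => rfl))

noncomputable def interpF (ζ : ℕ → ℂ) (b : ℝ) (n : ℕ) (z : ℂ) : ℂ :=
  ζ n * Complex.exp ((↑(b + 1) : ℂ) * (z - n)) * csinc (z - n)

lemma differentiable_interpF (ζ : ℕ → ℂ) (b : ℝ) (n : ℕ) :
    Differentiable ℂ (interpF ζ b n) := by
  unfold interpF
  refine ((differentiable_const _).mul (Complex.differentiable_exp.comp
    ((differentiable_const _).mul (differentiable_id.sub_const _)))).mul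
    (differentiable_csinc.comp (differentiable_id.sub_const _))

lemma norm_interpF_le (ζ : ℕ → ℂ) (a b : ℝ) (hb : 0 < b)
    (hζ : ∀ n : ℕ, ‖ζ n‖ < Real.exp (a + b * n)) {R : ℝ} (hR : 0 < R)
    (n : ℕ) {z : ℂ} (hz : z ∈ Metric.ball (0:ℂ) R) :
    ‖interpF ζ b n z‖ ≤
      Real.exp (a + b * n) * Real.exp ((b + 1) * (R - n)) * (Tc + Real.exp (Real.pi * R)) := by
  rw [Metric.mem_ball, dist_zero_right] at hz
  rw [interpF, norm_mul, norm_mul]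
  have h1 : ‖ζ n‖ ≤ Real.exp (a + b * n) := (hζ n).le
  have h2 : ‖Complex.exp ((↑(b + 1) : ℂ) * (z - n))‖ ≤ Real.exp ((b + 1) * (R - n)) := by
    rw [Complex.norm_exp]
    apply Real.exp_le_exp.2
    rw [Complex.re_ofReal_mul]
    have hre : (z - (n:ℂ)).re = z.re - n := by simp
    rw [hre]
    have : z.re ≤ R := le_trans (le_trans (le_abs_self _) (Complex.abs_re_le_norm z)) hz.le
    nlinarith
  have h3 : ‖csinc (z - n)‖ ≤ Tc + Real.exp (Real.pi * R) := by
    refine norm_csinc_le hR.le ?_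
    have him : (z - (n:ℂ)).im = z.im := by simp
    rw [him]
    exact le_trans (Complex.abs_im_le_norm z) hz.le
  calc ‖ζ n‖ * ‖Complex.exp ((↑(b + 1) : ℂ) * (z - n))‖ * ‖csinc (z - n)‖
      ≤ Real.exp (a + b * n) * Real.exp ((b + 1) * (R - n)) * (Tc + Real.exp (Real.pi * R)) := by
        gcongr
  
lemma summable_interp_bound (a b R : ℝ) :
    Summable (fun n : ℕ =>
      Real.exp (a + b * n) * Real.exp ((b + 1) * (R - n)) * (Tc + Real.exp (Real.pi * R))) := by
  have heq : (fun n : ℕ =>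
      Real.exp (a + b * n) * Real.exp ((b + 1) * (R - n)) * (Tc + Real.exp (Real.pi * R)))
      = fun n : ℕ => (Real.exp (a + (b + 1) * R) * (Tc + Real.exp (Real.pi * R)))
          * Real.exp (-(n:ℝ)) := by
    funext n
    rw [← Real.exp_add, show (a + b * n) + (b + 1) * (R - n) = (a + (b + 1) * R) + (-(n:ℝ)) by
      ring, Real.exp_add]
    ring
  rw [heq]
  exact Real.summable_exp_neg_nat.mul_left _

noncomputable def interpS (ζ : ℕ → ℂ) (b : ℝ) (z : ℂ) : ℂ := ∑' n, interpF ζ b n z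

lemma differentiable_interpS (ζ : ℕ → ℂ) (a b : ℝ) (hb : 0 < b)
    (hζ : ∀ n : ℕ, ‖ζ n‖ < Real.exp (a + b * n)) :
    Differentiable ℂ (interpS ζ b) := by
  intro z
  have hR : (0:ℝ) < ‖z‖ + 1 := by positivity
  have hd : DifferentiableOn ℂ (fun w : ℂ => ∑' n, interpF ζ b n w)
      (Metric.ball 0 (‖z‖ + 1)) := by
    refine Complex.differentiableOn_tsum_of_summable_norm
      (summable_interp_bound a b (‖z‖ + 1))
      (fun n => (differentiable_interpF ζ b n).differentiableOn) Metric.isOpen_ball ?_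
    intro n w hw
    exact norm_interpF_le ζ a b hb hζ hR n hw
  have : DifferentiableAt ℂ (fun w : ℂ => ∑' n, interpF ζ b n w) z :=
    hd.differentiableAt (Metric.isOpen_ball.mem_nhds (by
      rw [Metric.mem_ball, dist_zero_right]; linarith))
  exact this.congr_of_eventuallyEq (Filter.Eventually.of_forall (fun w => rfl))

lemma interpS_apply (ζ : ℕ → ℂ) (b : ℝ) (m : ℕ) : interpS ζ b (m : ℂ) = ζ m := by
  rw [interpS, tsum_eq_single m]
  · simp [interpF, csinc_zero]
  · intro n hn
    have hz : ((m:ℂ) - (n:ℂ)) = (((m:ℤ) - (n:ℤ) : ℤ) : ℂ) := by push_cast; ring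
    have hne : ((m:ℤ) - (n:ℤ)) ≠ 0 := by
      intro h
      apply hn
      omega
    rw [interpF, hz, csinc_int hne, mul_zero]

theorem interpolants_coset_infinite (ζ : ℕ → ℂ) (a b : ℝ) (hb : 0 < b)
    (hζ : ∀ n : ℕ, ‖ζ n‖ < Real.exp (a + b * n)) :
    {s : ℂ → ℂ | Differentiable ℂ s ∧ ∀ n : ℕ, s (n : ℂ) = ζ n}.Infinite ∧
    ∃ s₀ : ℂ → ℂ, Differentiable ℂ s₀ ∧ (∀ n : ℕ, s₀ (n : ℂ) = ζ n) ∧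
      {g : ℂ → ℂ | Differentiable ℂ g ∧ ∀ n : ℕ, g (n : ℂ) = 0}.Infinite ∧
      {s : ℂ → ℂ | Differentiable ℂ s ∧ ∀ n : ℕ, s (n : ℂ) = ζ n} =
        (fun g : ℂ → ℂ => s₀ + g) ''
          {g : ℂ → ℂ | Differentiable ℂ g ∧ ∀ n : ℕ, g (n : ℂ) = 0} := by
  have hs₀d : Differentiable ℂ (interpS ζ b) := differentiable_interpS ζ a b hb hζ
  have hs₀v : ∀ n : ℕ, interpS ζ b (n : ℂ) = ζ n := interpS_apply ζ b
  have hS0 : {g : ℂ → ℂ | Differentiable ℂ g ∧ ∀ n : ℕ, g (n : ℂ) = 0}.Infinite := by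
    apply Set.infinite_of_injective_forall_mem
      (f := fun c : ℂ => fun z : ℂ => c * Complex.sin ((Real.pi : ℂ) * z))
    · intro c₁ c₂ h
      have h2 := congrFun h (1/2 : ℂ)
      simp only at h2
      have hs : ((Real.pi : ℂ) * (1/2 : ℂ)) = ((Real.pi / 2 : ℝ) : ℂ) := by push_cast; ring
      rw [hs, ← Complex.ofReal_sin, Real.sin_pi_div_two] at h2
      simpa using h2
    · intro c
      refine ⟨(differentiable_const c).mul (Complex.differentiable_sin.comp
        ((differentiable_const _).mul differentiable_id)), fun n => ?_⟩
      have : Complex.sin ((Real.pi : ℂ) * (n : ℂ)) = 0 :=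
        Complex.sin_eq_zero_iff.2 ⟨n, by push_cast; ring⟩
      simp [this]
  have hset : {s : ℂ → ℂ | Differentiable ℂ s ∧ ∀ n : ℕ, s (n : ℂ) = ζ n} =
      (fun g : ℂ → ℂ => interpS ζ b + g) ''
        {g : ℂ → ℂ | Differentiable ℂ g ∧ ∀ n : ℕ, g (n : ℂ) = 0} := by
    ext s
    simp only [Set.mem_setOf_eq, Set.mem_image]
    constructor
    · rintro ⟨hsd, hsv⟩
      refine ⟨s - interpS ζ b, ⟨hsd.sub hs₀d, fun n => by
        simp [Pi.sub_apply, hsv n, hs₀v n]⟩, ?_⟩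
      funext z
      simp
    · rintro ⟨g, ⟨hgd, hgv⟩, rfl⟩
      exact ⟨hs₀d.add hgd, fun n => by simp [Pi.add_apply, hs₀v n, hgv n]⟩
  refine ⟨?_, interpS ζ b, hs₀d, hs₀v, hS0, hset⟩
  rw [hset]
  exact hS0.image ((add_right_injective _).injOn)
end

section
/- Let k ≥ 1 and let (ζ_{n₁,…,n_k}) be a k-indexed sequence of complex numbers with |ζ_{n₁,…,n_k}| < exp(a + b₁n₁ + … + b_k n_k) for some a ∈ ℝ and b₁,…,b_k > 0. Then there exists an entire function s : ℂ^k → ℂ (holomorphic on all of ℂ^k) with s(n₁,…,n_k) = ζ_{n₁,…,n_k} for all non-negative integers n₁,…,n_k. -/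
open Complex Metric


noncomputable def sinc (w : ℂ) : ℂ := if w = 0 then 1 else Complex.sin w / w

lemma sinc_zero : sinc 0 = 1 := if_pos rfl

lemma sinc_of_ne {w : ℂ} (h : w ≠ 0) : sinc w = Complex.sin w / w := if_neg h

lemma differentiable_sinc : Differentiable ℂ sinc := by
  have h0 : (Set.univ : Set ℂ) ∈ nhds (0:ℂ) := Filter.univ_mem
  have hd : DifferentiableOn ℂ (fun z : ℂ => Complex.sin z / z) (Set.univ \ {0}) := by
    intro z hz
    exact ((Complex.differentiable_sin z).div (differentiableAt_id) hz.2).differentiableWithinAt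
  have ho : (fun z : ℂ => Complex.sin z / z - Complex.sin 0 / 0) =o[nhdsWithin (0:ℂ) {(0:ℂ)}ᶜ]
      fun z => (z - 0)⁻¹ := by
    simp only [Complex.sin_zero, zero_div, sub_zero]
    have h1 : (fun z : ℂ => Complex.sin z) =o[nhdsWithin (0:ℂ) {(0:ℂ)}ᶜ] (fun _ => (1:ℂ)) := by
      rw [Asymptotics.isLittleO_one_iff]
      simpa using (Complex.continuous_sin.tendsto 0).mono_left nhdsWithin_le_nhds
    have h2 := h1.mul_isBigO (Asymptotics.isBigO_refl (fun z : ℂ => z⁻¹) _)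
    simpa [div_eq_mul_inv] using h2
  have H := Complex.differentiableOn_update_limUnder_of_isLittleO h0 hd ho
  have hlim : Filter.Tendsto (fun z : ℂ => Complex.sin z / z) (nhdsWithin (0:ℂ) {(0:ℂ)}ᶜ) (nhds 1) := by
    have h := Complex.hasDerivAt_sin 0
    rw [hasDerivAt_iff_tendsto_slope] at h
    have : slope Complex.sin 0 = fun z : ℂ => Complex.sin z / z := by
      funext z; simp [slope_def_field]
    rw [this] at h
    simpa using h
  have heq : Function.update (fun z : ℂ => Complex.sin z / z) 0
      (Filter.limUnder (nhdsWithin (0:ℂ) {(0:ℂ)}ᶜ) fun z : ℂ => Complex.sin z / z) = sinc := by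
    funext z
    rcases eq_or_ne z 0 with rfl | hz
    · rw [Function.update_self, hlim.limUnder_eq, sinc_zero]
    · rw [Function.update_of_ne hz, sinc_of_ne hz]
  rw [heq] at H
  exact differentiableOn_univ.mp H

lemma norm_sin_le_s8 (w : ℂ) : ‖Complex.sin w‖ ≤ Real.exp |w.im| := by
  have h : Complex.sin w = (Complex.exp (-w * I) - Complex.exp (w * I)) * I / 2 := rfl
  rw [h]
  have e1 : ‖Complex.exp (-w * I)‖ = Real.exp w.im := by
    rw [Complex.norm_exp]; simp
  have e2 : ‖Complex.exp (w * I)‖ = Real.exp (-w.im) := by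
    rw [Complex.norm_exp]; simp
  calc ‖(Complex.exp (-w * I) - Complex.exp (w * I)) * I / 2‖
      = ‖Complex.exp (-w * I) - Complex.exp (w * I)‖ / 2 := by
        rw [norm_div, norm_mul]; simp
    _ ≤ (Real.exp w.im + Real.exp (-w.im)) / 2 := by
        rw [e1.symm, e2.symm] at *
        have := norm_sub_le (Complex.exp (-w * I)) (Complex.exp (w * I))
        linarith [this]
    _ ≤ Real.exp |w.im| := by
        have h1 : Real.exp w.im ≤ Real.exp |w.im| := Real.exp_le_exp.2 (le_abs_self _)
        have h2 : Real.exp (-w.im) ≤ Real.exp |w.im| := Real.exp_le_exp.2 (neg_le_abs _)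
        linarith

noncomputable def Fb (β : ℝ) (m : ℕ) (ξ : ℂ) : ℂ :=
  Complex.exp ((ξ - m) * β) * sinc (2 * Real.pi * (ξ - m))

lemma differentiable_Fb (β : ℝ) (m : ℕ) : Differentiable ℂ (Fb β m) := by
  apply Differentiable.mul
  · exact Complex.differentiable_exp.comp ((differentiable_id.sub_const _).mul_const _)
  · exact differentiable_sinc.comp ((differentiable_id.sub_const _).const_mul _)

lemma Fb_self (β : ℝ) (m : ℕ) : Fb β m m = 1 := by
  simp [Fb, sinc_zero]

lemma Fb_ne (β : ℝ) (m j : ℕ) (h : j ≠ m) : Fb β m j = 0 := by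
  have hd : ((j:ℂ) - m) ≠ 0 := by
    simp only [sub_ne_zero]
    exact_mod_cast fun hh => h (Nat.cast_injective hh)
  have harg : (2 * (Real.pi:ℂ) * ((j:ℂ) - m)) ≠ 0 := by
    apply mul_ne_zero (mul_ne_zero two_ne_zero _) hd
    exact_mod_cast Real.pi_ne_zero
  rw [Fb, sinc_of_ne harg]
  have : Complex.sin (2 * (Real.pi:ℂ) * ((j:ℂ) - m)) = 0 := by
    have : (2 * (Real.pi:ℂ) * ((j:ℂ) - m)) = ((2 * ((j:ℤ) - (m:ℤ)) : ℤ) : ℂ) * (Real.pi:ℂ) := by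
      push_cast; ring
    rw [this, Complex.sin_int_mul_pi]
  simp [this]

lemma sinc_bound_exists : ∃ K : ℝ, ∀ w ∈ closedBall (0:ℂ) 1, ‖sinc w‖ ≤ K := by
  obtain ⟨K, hK⟩ := (isCompact_closedBall (0:ℂ) 1).exists_bound_of_continuousOn
    (differentiable_sinc.continuous.continuousOn)
  exact ⟨K, hK⟩

lemma norm_Fb_le {β r : ℝ} {K : ℝ} (hK : ∀ w ∈ closedBall (0:ℂ) 1, ‖sinc w‖ ≤ K)
    (hβ : 0 < β) (hr : 1 ≤ r) (m : ℕ) {ξ : ℂ} (hξ : ‖ξ‖ ≤ r) :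
    ‖Fb β m ξ‖ ≤ max K (Real.exp (2 * Real.pi * r)) * Real.exp ((r - m) * β) := by
  rw [Fb, norm_mul, mul_comm]
  have hexp : ‖Complex.exp ((ξ - m) * β)‖ ≤ Real.exp ((r - m) * β) := by
    rw [Complex.norm_exp]
    apply Real.exp_le_exp.2
    have hre : ((ξ - (m:ℂ)) * (β:ℂ)).re = (ξ.re - m) * β := by
      simp [Complex.mul_re]
    rw [hre]
    apply mul_le_mul_of_nonneg_right _ hβ.le
    have : ξ.re ≤ ‖ξ‖ := by
      exact (Complex.abs_re_le_norm ξ).trans' (le_abs_self _)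
    linarith
  have hsinc : ‖sinc (2 * Real.pi * (ξ - m))‖ ≤ max K (Real.exp (2 * Real.pi * r)) := by
    set w : ℂ := 2 * Real.pi * (ξ - m) with hw
    rcases le_or_gt ‖w‖ 1 with h1 | h1
    · exact le_max_of_le_left (hK w (by simpa [dist_eq_norm] using h1))
    · have hw0 : w ≠ 0 := by intro h; rw [h, norm_zero] at h1; linarith
      rw [sinc_of_ne hw0, norm_div]
      apply le_max_of_le_right
      calc ‖Complex.sin w‖ / ‖w‖ ≤ ‖Complex.sin w‖ := by
            rw [div_le_iff₀ (by linarith : (0:ℝ) < ‖w‖)]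
            nlinarith [norm_nonneg (Complex.sin w)]
        _ ≤ Real.exp |w.im| := norm_sin_le_s8 w
        _ ≤ Real.exp (2 * Real.pi * r) := by
            apply Real.exp_le_exp.2
            have him : w.im = 2 * Real.pi * ξ.im := by
              rw [hw]; simp [Complex.mul_im]
            rw [him, abs_mul]
            have : |ξ.im| ≤ r := by
              have := Complex.abs_im_le_norm ξ
              linarith
            have hpi : (0:ℝ) ≤ 2 * Real.pi := by positivity
            calc |2 * Real.pi| * |ξ.im| = 2 * Real.pi * |ξ.im| := by
                  rw [_root_.abs_of_nonneg hpi]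
              _ ≤ 2 * Real.pi * r := by nlinarith [abs_nonneg ξ.im]
  calc ‖sinc (2 * Real.pi * (ξ - m))‖ * ‖Complex.exp ((ξ - m) * β)‖
      ≤ max K (Real.exp (2 * Real.pi * r)) * Real.exp ((r - m) * β) :=
        mul_le_mul hsinc hexp (norm_nonneg _) (le_max_of_le_right (Real.exp_pos _).le)


lemma summable_pi_prod : ∀ (k : ℕ) (f : Fin k → ℕ → ℝ), (∀ i m, 0 ≤ f i m) →
    (∀ i, Summable (f i)) → Summable (fun n : Fin k → ℕ => ∏ i, f i (n i)) := by
  intro k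
  induction k with
  | zero =>
    intro f _ _
    have : (fun n : Fin 0 → ℕ => ∏ i, f i (n i)) = fun _ => 1 := by
      funext n; simp
    rw [this]
    exact .of_finite
  | succ k ih =>
    intro f hnn hs
    have ih' : Summable (fun n : Fin k → ℕ => ∏ i, f i.succ (n i)) :=
      ih (fun i => f i.succ) (fun i m => hnn _ _) (fun i => hs _)
    have h1 : (0 : ℕ → ℝ) ≤ f 0 := fun m => hnn 0 m
    have h2 : (0 : (Fin k → ℕ) → ℝ) ≤ fun n : Fin k → ℕ => ∏ i, f i.succ (n i) :=
      fun n => Finset.prod_nonneg fun i _ => hnn _ _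
    have hg := Summable.mul_of_nonneg (hs 0) ih' h1 h2
    have := (Fin.consEquiv (fun _ : Fin (k+1) => ℕ)).summable_iff
      (f := fun n : Fin (k+1) → ℕ => ∏ i, f i (n i))
    rw [← this]
    apply hg.congr
    intro p
    simp only [Function.comp, Fin.consEquiv_apply, Fin.prod_univ_succ, Fin.cons_zero, Fin.cons_succ]

theorem exists_entire_interpolant_multi (k : ℕ) (hk : 1 ≤ k)
    (ζ : (Fin k → ℕ) → ℂ) (a : ℝ) (b : Fin k → ℝ) (hb : ∀ i, 0 < b i)
    (hζ : ∀ n : Fin k → ℕ, ‖ζ n‖ < Real.exp (a + ∑ i, b i * n i)) :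
    ∃ s : (Fin k → ℂ) → ℂ, Differentiable ℂ s ∧
      ∀ n : Fin k → ℕ, s (fun i => (n i : ℂ)) = ζ n := by
  classical
  set c : Fin k → ℝ := fun i => 2 * Real.pi + b i + 1 with hc_def
  have hc : ∀ i, 0 < c i := fun i => by
    have := Real.pi_pos; have := hb i; simp only [hc_def]; positivity
  obtain ⟨K, hK⟩ := sinc_bound_exists
  have hK1 : (1:ℝ) ≤ K := by
    have := hK 0 (by simp)
    rwa [sinc_zero, norm_one] at this
  set g : (Fin k → ℕ) → (Fin k → ℂ) → ℂ :=
    fun n z => ζ n * ∏ i, Fb (c i) (n i) (z i) with hg_def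
  have hgdiff : ∀ n, Differentiable ℂ (g n) := by
    intro n
    apply Differentiable.const_mul
    have : ∀ s : Finset (Fin k), Differentiable ℂ (fun z : Fin k → ℂ => ∏ i ∈ s, Fb (c i) (n i) (z i)) := by
      intro s
      induction s using Finset.induction_on with
      | empty => simpa using differentiable_const (1:ℂ)
      | insert _ _ hnotmem ih =>
        rename_i j s'
        have hj : Differentiable ℂ (fun z : Fin k → ℂ => Fb (c j) (n j) (z j)) :=
          (differentiable_Fb (c j) (n j)).comp (ContinuousLinearMap.proj (R := ℂ) (φ := fun _ : Fin k => ℂ) j).differentiable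
        simp only [Finset.prod_insert hnotmem]; exact hj.mul ih
    exact this Finset.univ
  refine ⟨fun z => ∑' n, g n z, ?_, ?_⟩
  · -- differentiability
    intro x
    set R : ℝ := ‖x‖ + 1 with hR_def
    set r : ℝ := ‖x‖ + 2 with hr_def
    have hr1 : (1:ℝ) ≤ r := by
      have := norm_nonneg x; simp only [hr_def]; linarith
    set Cs : ℝ := max K (Real.exp (2 * Real.pi * r)) with hCs_def
    have hCs : 0 < Cs := lt_of_lt_of_le one_pos (le_trans hK1 (le_max_left _ _))
    set f : Fin k → ℕ → ℝ := fun i m => Cs * Real.exp (b i * m + (r - m) * c i) with hf_def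
    have hfnn : ∀ i m, 0 ≤ f i m := fun i m => by positivity
    have hfsum : ∀ i, Summable (f i) := by
      intro i
      have heq : ∀ m : ℕ, f i m = (Cs * Real.exp (r * c i)) * Real.exp (-(2 * Real.pi + 1)) ^ m := by
        intro m
        have h1 : b i * m + (r - m) * c i = r * c i + m * (-(2 * Real.pi + 1)) := by
          simp only [hc_def]; ring
        rw [hf_def]
        simp only
        rw [h1, Real.exp_add, ← Real.exp_nat_mul, mul_assoc]
      have hlt : Real.exp (-(2 * Real.pi + 1)) < 1 := by
        rw [Real.exp_lt_one_iff]
        have := Real.pi_pos; linarith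
      have := (summable_geometric_of_lt_one (Real.exp_pos _).le hlt).mul_left
        (Cs * Real.exp (r * c i))
      exact this.congr fun m => (heq m).symm
    set u : (Fin k → ℕ) → ℝ := fun n => Real.exp a * ∏ i, f i (n i) with hu_def
    have hunn : ∀ n, 0 ≤ u n := fun n => by
      apply mul_nonneg (Real.exp_pos _).le
      exact Finset.prod_nonneg fun i _ => hfnn i _
    have hu : Summable u := (summable_pi_prod k f hfnn hfsum).mul_left _
    have hkey : ∀ (n : Fin k → ℕ) (z : Fin k → ℂ), ‖z‖ ≤ r → ‖g n z‖ ≤ u n := by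
      intro n z hz
      rw [hg_def]
      simp only [norm_mul, norm_prod]
      have heach : ∀ i : Fin k, ‖Fb (c i) (n i) (z i)‖ ≤ Cs * Real.exp ((r - n i) * c i) := by
        intro i
        exact norm_Fb_le hK (hc i) hr1 (n i) ((norm_le_pi_norm z i).trans hz)
      calc ‖ζ n‖ * ∏ i, ‖Fb (c i) (n i) (z i)‖
          ≤ Real.exp (a + ∑ i, b i * n i) * ∏ i, (Cs * Real.exp ((r - n i) * c i)) := by
            apply mul_le_mul (hζ n).le
              (Finset.prod_le_prod (fun i _ => norm_nonneg _) (fun i _ => heach i))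
              (Finset.prod_nonneg fun i _ => norm_nonneg _) (Real.exp_pos _).le
        _ = u n := by
            rw [Real.exp_add, Real.exp_sum, hu_def, mul_assoc, ← Finset.prod_mul_distrib]
            simp only
            congr 1
            apply Finset.prod_congr rfl
            intro i _
            rw [hf_def]
            simp only
            rw [Real.exp_add]
            ring
    have hder : ∀ (n : Fin k → ℕ) (y : Fin k → ℂ), y ∈ ball (0 : Fin k → ℂ) R →
        ‖fderiv ℂ (g n) y‖ ≤ u n := by
      intro n y hy
      apply ContinuousLinearMap.opNorm_le_bound _ (hunn n)
      intro v
      rcases eq_or_ne v 0 with rfl | hv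
      · simp
      · set v' : Fin k → ℂ := ((‖v‖ : ℂ))⁻¹ • v with hv'_def
        have hnv : (0:ℝ) < ‖v‖ := norm_pos_iff.mpr hv
        have hnvc : ((‖v‖ : ℂ)) ≠ 0 := by
          simpa using hnv.ne'
        have hv'1 : ‖v'‖ = 1 := by
          rw [hv'_def, norm_smul, norm_inv]
          rw [Complex.norm_real, Real.norm_eq_abs, abs_of_pos hnv]
          field_simp
        have hA : HasDerivAt (fun t : ℂ => y + t • v') v' 0 := by
          simpa using ((hasDerivAt_id (0:ℂ)).smul_const v').const_add y
        have h1 : HasFDerivAt (g n) (fderiv ℂ (g n) y) (y + (0:ℂ) • v') := by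
          simpa using ((hgdiff n) y).hasFDerivAt
        have hcomp : HasDerivAt (fun t : ℂ => g n (y + t • v')) (fderiv ℂ (g n) y v') 0 :=
          h1.comp_hasDerivAt (f := fun t : ℂ => y + t • v') 0 hA
        have hDC : DiffContOnCl ℂ (fun t : ℂ => g n (y + t • v')) (ball (0:ℂ) 1) :=
          ((hgdiff n).comp ((differentiable_id.smul_const v').const_add y)).diffContOnCl
        have hbnd : ∀ t ∈ sphere (0:ℂ) 1, ‖g n (y + t • v')‖ ≤ u n := by
          intro t ht
          apply hkey
          have ht1 : ‖t‖ = 1 := by simpa using mem_sphere_zero_iff_norm.mp ht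
          have hyR : ‖y‖ < R := mem_ball_zero_iff.mp hy
          calc ‖y + t • v'‖ ≤ ‖y‖ + ‖t • v'‖ := norm_add_le _ _
            _ = ‖y‖ + 1 := by rw [norm_smul, ht1, hv'1]; ring
            _ ≤ r := by simp only [hR_def, hr_def] at *; linarith
        have hcau := Complex.norm_deriv_le_of_forall_mem_sphere_norm_le one_pos hDC hbnd
        rw [hcomp.deriv] at hcau
        have hvv : fderiv ℂ (g n) y v = ((‖v‖ : ℂ)) • fderiv ℂ (g n) y v' := by
          rw [← ContinuousLinearMap.map_smul]
          congr 1
          rw [hv'_def, smul_inv_smul₀ hnvc]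
        rw [hvv, norm_smul, Complex.norm_real, Real.norm_eq_abs, abs_of_pos hnv]
        rw [div_one] at hcau
        rw [mul_comm]
        exact mul_le_mul_of_nonneg_right hcau hnv.le
    have hsum0 : Summable (fun n => g n (0 : Fin k → ℂ)) := by
      apply Summable.of_norm_bounded hu
      intro n
      apply hkey
      rw [norm_zero]
      linarith
    have hx : x ∈ ball (0 : Fin k → ℂ) R := by
      rw [mem_ball_zero_iff]; simp only [hR_def]; linarith
    have H := hasFDerivAt_tsum_of_isPreconnected hu isOpen_ball
      ((convex_ball (0 : Fin k → ℂ) R).isPreconnected)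
      (fun n y _ => ((hgdiff n) y).hasFDerivAt) hder
      (mem_ball_self (by simp only [hR_def]; positivity)) hsum0 hx
    exact H.differentiableAt
  · -- interpolation
    intro n
    have h0 : ∀ m, m ≠ n → g m (fun i => (n i : ℂ)) = 0 := by
      intro m hm
      obtain ⟨i, hi⟩ := Function.ne_iff.mp hm
      rw [hg_def]
      simp only
      rw [Finset.prod_eq_zero (Finset.mem_univ i), mul_zero]
      exact Fb_ne (c i) (m i) (n i) hi.symm
    show (∑' m, g m fun i => (n i : ℂ)) = ζ n
    rw [tsum_eq_single n h0]
    rw [hg_def]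
    simp [Fb_self]
end
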